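/- arXiv:math/0403506 — 6 statements merged into one kernel-verified Lean document; each statement's English description precedes it below -/
import Mathlib

section
/- The subset E' is a deformation of E into itself along the shift homotopy: the map H : [0,1] × E → E given by H(t, (f₁,…,fₙ)) = (T_t f₁,…,T_t fₙ) is continuous, takes values in E for every t ∈ [0,1], satisfies H(0, f) = f for all f ∈ E, and satisfies H(1, f) ∈ E' for all f ∈ E. In particular E can be continuously deformed within E into the subspace E'. -/
open MeasureTheory Set

/-- `H = L²([0,∞), ℝ)`. -/
noncomputable abbrev Hsp : Type :=
  MeasureTheory.Lp ℝ 2 (MeasureTheory.volume.restrict (Set.Ici (0 : ℝ)))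

namespace Stmt6Aux

noncomputable section

/-- The base restricted measure. -/
abbrev mu0 : Measure ℝ := MeasureTheory.volume.restrict (Set.Ici (0 : ℝ))

/-- Full-line `L²`. -/
abbrev Lfull : Type := Lp ℝ 2 (volume : Measure ℝ)

lemma indicator_ae {h₁ h₂ : ℝ → ℝ} (h : h₁ =ᵐ[mu0] h₂) :
    (Ici (0:ℝ)).indicator h₁ =ᵐ[volume] (Ici (0:ℝ)).indicator h₂ := by
  rw [Filter.EventuallyEq, ae_iff] at h ⊢
  rw [Measure.restrict_apply' measurableSet_Ici] at h
  refine measure_mono_null ?_ h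
  intro x hx
  simp only [mem_setOf_eq, mem_inter_iff] at hx ⊢
  by_cases hx0 : x ∈ Ici (0:ℝ)
  · refine ⟨?_, hx0⟩
    simpa [indicator_of_mem hx0] using hx
  · simp [indicator_of_notMem hx0] at hx

lemma memLp_ind (f : Hsp) : MemLp ((Ici (0:ℝ)).indicator ⇑f) 2 volume := by
  constructor
  · exact ((Lp.stronglyMeasurable f).indicator measurableSet_Ici).aestronglyMeasurable
  · rw [eLpNorm_indicator_eq_eLpNorm_restrict measurableSet_Ici]
    exact Lp.eLpNorm_lt_top f

/-- Extension by zero `Hsp → Lfull`. -/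
def extFun (f : Hsp) : Lfull := (memLp_ind f).toLp _

lemma coeFn_extFun (f : Hsp) : ⇑(extFun f) =ᵐ[volume] (Ici (0:ℝ)).indicator ⇑f :=
  MemLp.coeFn_toLp _

lemma norm_extFun (f : Hsp) : ‖extFun f‖ = ‖f‖ := by
  rw [extFun, Lp.norm_toLp, eLpNorm_indicator_eq_eLpNorm_restrict measurableSet_Ici, Lp.norm_def]

lemma extFun_add (f g : Hsp) : extFun (f + g) = extFun f + extFun g := by
  apply Lp.ext
  refine (coeFn_extFun (f + g)).trans ?_ |>.trans (Lp.coeFn_add _ _).symm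
  have h1 : (Ici (0:ℝ)).indicator ⇑(f + g) =ᵐ[volume]
      (Ici (0:ℝ)).indicator (⇑f + ⇑g) := indicator_ae (Lp.coeFn_add f g)
  refine h1.trans ?_
  have h2 : (Ici (0:ℝ)).indicator (⇑f + ⇑g) =
      (Ici (0:ℝ)).indicator ⇑f + (Ici (0:ℝ)).indicator ⇑g := by
    funext x
    by_cases hx : x ∈ Ici (0:ℝ) <;> simp [Set.indicator, hx]
  rw [h2]
  exact ((coeFn_extFun f).symm.add (coeFn_extFun g).symm)

lemma extFun_smul (c : ℝ) (f : Hsp) : extFun (c • f) = c • extFun f := by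
  apply Lp.ext
  refine (coeFn_extFun (c • f)).trans ?_ |>.trans (Lp.coeFn_smul _ _).symm
  have h1 : (Ici (0:ℝ)).indicator ⇑(c • f) =ᵐ[volume]
      (Ici (0:ℝ)).indicator (c • ⇑f) := indicator_ae (Lp.coeFn_smul c f)
  refine h1.trans ?_
  have h2 : (Ici (0:ℝ)).indicator (c • ⇑f) = c • (Ici (0:ℝ)).indicator ⇑f := by
    funext x
    by_cases hx : x ∈ Ici (0:ℝ) <;> simp [Set.indicator, hx]
  rw [h2]
  exact (coeFn_extFun f).symm.const_smul c

lemma memLp_res (f : Lfull) : MemLp ⇑f 2 mu0 :=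
  (Lp.memLp f).mono_measure Measure.restrict_le_self

/-- Restriction `Lfull → Hsp`. -/
def resFun (f : Lfull) : Hsp := (memLp_res f).toLp _

lemma coeFn_resFun (f : Lfull) : ⇑(resFun f) =ᵐ[mu0] ⇑f := MemLp.coeFn_toLp _

lemma norm_resFun (f : Lfull) : ‖resFun f‖ ≤ ‖f‖ := by
  rw [resFun, Lp.norm_toLp, Lp.norm_def]
  exact ENNReal.toReal_mono (Lp.eLpNorm_ne_top f)
    (eLpNorm_mono_measure _ Measure.restrict_le_self)

lemma resFun_add (f g : Lfull) : resFun (f + g) = resFun f + resFun g := by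
  apply Lp.ext
  have h0 : ⇑(f + g) =ᵐ[mu0] (⇑f + ⇑g) := ae_restrict_of_ae (Lp.coeFn_add f g)
  refine (coeFn_resFun (f + g)).trans ?_ |>.trans (Lp.coeFn_add _ _).symm
  exact h0.trans ((coeFn_resFun f).symm.add (coeFn_resFun g).symm)

lemma resFun_smul (c : ℝ) (f : Lfull) : resFun (c • f) = c • resFun f := by
  apply Lp.ext
  have h0 : ⇑(c • f) =ᵐ[mu0] (c • ⇑f) := ae_restrict_of_ae (Lp.coeFn_smul c f)
  refine (coeFn_resFun (c • f)).trans ?_ |>.trans (Lp.coeFn_smul _ _).symm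
  exact h0.trans ((coeFn_resFun f).symm.const_smul c)

/-- Restriction as a linear map. -/
def resL : Lfull →ₗ[ℝ] Hsp where
  toFun := resFun
  map_add' := resFun_add
  map_smul' := resFun_smul

/-- Extension as a linear map. -/
def extL : Hsp →ₗ[ℝ] Lfull where
  toFun := extFun
  map_add' := extFun_add
  map_smul' := extFun_smul

/-- The shift `x ↦ x - t` as a continuous map. -/
def shiftCM (t : ℝ) : C(ℝ, ℝ) := ⟨fun x => x - t, by continuity⟩

lemma shift_mp (t : ℝ) : MeasurePreserving (shiftCM t) (volume : Measure ℝ) volume :=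
  measurePreserving_sub_right volume t

/-- The shift homotopy on `Hsp`. -/
def Phi (t : ℝ) (f : Hsp) : Hsp :=
  resFun (Lp.compMeasurePreserving (shiftCM t) (shift_mp t) (extFun f))

lemma coeFn_Phi (t : ℝ) (f : Hsp) :
    ⇑(Phi t f) =ᵐ[mu0] fun x => if x < t then 0 else f (x - t) := by
  refine (coeFn_resFun _).trans ?_
  have h2 : ⇑(Lp.compMeasurePreserving (shiftCM t) (shift_mp t) (extFun f)) =ᵐ[mu0]
      (⇑(extFun f) ∘ (shiftCM t)) :=
    ae_restrict_of_ae (Lp.coeFn_compMeasurePreserving (extFun f) (shift_mp t))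
  refine h2.trans ?_
  have h3 : (⇑(extFun f) ∘ (shiftCM t)) =ᵐ[mu0]
      (((Ici (0:ℝ)).indicator ⇑f) ∘ (shiftCM t)) :=
    ae_restrict_of_ae ((shift_mp t).quasiMeasurePreserving.ae_eq_comp (coeFn_extFun f))
  refine h3.trans (Filter.EventuallyEq.of_eq ?_)
  funext x
  by_cases hx : x < t
  · have h : ¬ (0:ℝ) ≤ x - t := by simp only [not_le]; linarith
    simp [Function.comp, shiftCM, Set.indicator, h, hx]
  · have h : (0:ℝ) ≤ x - t := by simpa [sub_nonneg] using not_lt.mp hx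
    simp [Function.comp, shiftCM, Set.indicator, h, hx]

/-- The shift homotopy as a linear map. -/
def PhiL (t : ℝ) : Hsp →ₗ[ℝ] Hsp :=
  resL ∘ₗ ((Lp.compMeasurePreservingₗ ℝ (⇑(shiftCM t)) (shift_mp t)).comp extL)

lemma PhiL_apply (t : ℝ) (f : Hsp) : PhiL t f = Phi t f := rfl

lemma Phi_injective (t : ℝ) (ht : 0 ≤ t) : Function.Injective (PhiL t) := by
  rw [← LinearMap.ker_eq_bot, LinearMap.ker_eq_bot']
  intro f hf
  have h0 : (fun x => if x < t then 0 else f (x - t)) =ᵐ[mu0] 0 := by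
    refine (coeFn_Phi t f).symm.trans ?_
    have hc : ⇑(PhiL t f) =ᵐ[mu0] ⇑(0 : Hsp) := by rw [hf]
    exact hc.trans (Lp.coeFn_zero _ _ _)
  apply Lp.ext (μ := mu0)
  refine Filter.EventuallyEq.trans ?_ (Lp.coeFn_zero _ _ _).symm
  rw [Filter.EventuallyEq, ae_iff] at h0 ⊢
  rw [Measure.restrict_apply' measurableSet_Ici] at h0 ⊢
  set A : Set ℝ := {y | ¬ ⇑f y = (0:ℝ→ℝ) y} ∩ Ici 0 with hA
  have hAm : MeasurableSet A := by
    have h1 : {y | ¬ ⇑f y = (0:ℝ→ℝ) y} = (⇑f ⁻¹' {0})ᶜ := by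
      ext y; simp [Set.mem_preimage]
    have h2 : MeasurableSet ((⇑f ⁻¹' {0})ᶜ) :=
      ((Lp.stronglyMeasurable f).measurable (measurableSet_singleton 0)).compl
    rw [hA, h1]
    exact h2.inter measurableSet_Ici
  have hpre : volume ((· - t) ⁻¹' A) = volume A :=
    (measurePreserving_sub_right volume t).measure_preimage hAm.nullMeasurableSet
  have hsub : (· - t) ⁻¹' A ⊆ {x | ¬ (if x < t then 0 else ⇑f (x - t)) = (0:ℝ→ℝ) x} ∩ Ici 0 := by
    intro x hx
    obtain ⟨hfx, hxt⟩ := hx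
    simp only [mem_setOf_eq] at hfx
    have hxt' : t ≤ x := by
      have h := mem_Ici.mp hxt
      simp only at h
      linarith
    refine ⟨?_, mem_Ici.mpr (le_trans ht hxt')⟩
    simp only [mem_setOf_eq, if_neg (not_lt.mpr hxt')]
    simpa using hfx
  have hle : volume A ≤ 0 := by
    calc volume A = volume ((· - t) ⁻¹' A) := hpre.symm
      _ ≤ volume ({x | ¬ (if x < t then 0 else ⇑f (x - t)) = (0:ℝ→ℝ) x} ∩ Ici 0) :=
          measure_mono hsub
      _ = 0 := h0
  exact le_zero_iff.mp hle

lemma continuous_Phi : Continuous fun p : ℝ × Hsp => Phi p.1 p.2 := by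
  have hres : Continuous resFun :=
    AddMonoidHomClass.continuous_of_bound resL 1 (fun f => by rw [one_mul]; exact norm_resFun f)
  have hext : Continuous extFun :=
    AddMonoidHomClass.continuous_of_bound extL 1 (fun f => by rw [one_mul]; exact (norm_extFun f).le)
  have hcm : Continuous fun p : ℝ × Hsp => shiftCM p.1 := by
    apply ContinuousMap.continuous_of_continuous_uncurry
    exact (continuous_snd.sub (continuous_fst.comp continuous_fst))
  have hcomp : Continuous fun p : ℝ × Hsp =>
      Lp.compMeasurePreserving (shiftCM p.1) (shift_mp p.1) (extFun p.2) :=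
    Continuous.compMeasurePreservingLp (hext.comp continuous_snd) hcm
      (fun p => shift_mp p.1) ENNReal.ofNat_ne_top
  exact hres.comp hcomp

lemma Phi_eq_T (T : ℝ → Hsp → Hsp)
    (hT : ∀ t, 0 ≤ t → ∀ f : Hsp,
      (T t f : ℝ → ℝ) =ᵐ[mu0] fun x => if x < t then 0 else f (x - t))
    {t : ℝ} (ht : 0 ≤ t) (f : Hsp) : T t f = Phi t f :=
  Lp.ext ((hT t ht f).trans (coeFn_Phi t f).symm)

end

end Stmt6Aux

set_option maxHeartbeats 1000000 in
theorem stmt6 (n : ℕ) (hn : 1 ≤ n) (T : ℝ → Hsp → Hsp)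
    (hT : ∀ t, 0 ≤ t → ∀ f : Hsp,
      (T t f : ℝ → ℝ) =ᵐ[MeasureTheory.volume.restrict (Set.Ici (0 : ℝ))]
        fun x => if x < t then 0 else f (x - t)) :
    (∀ t ∈ Set.Icc (0 : ℝ) 1, ∀ f : Fin n → Hsp, LinearIndependent ℝ f →
        LinearIndependent ℝ fun i => T t (f i)) ∧
    Continuous (fun p : Set.Icc (0 : ℝ) 1 × {f : Fin n → Hsp // LinearIndependent ℝ f} =>
        (fun i => T (p.1 : ℝ) ((p.2 : Fin n → Hsp) i) : Fin n → Hsp)) ∧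
    (∀ f : {f : Fin n → Hsp // LinearIndependent ℝ f},
        (fun i => T 0 ((f : Fin n → Hsp) i)) = (f : Fin n → Hsp)) ∧
    (∀ f : {f : Fin n → Hsp // LinearIndependent ℝ f}, ∀ i,
        (T 1 ((f : Fin n → Hsp) i) : ℝ → ℝ)
          =ᵐ[MeasureTheory.volume.restrict (Set.Icc (0 : ℝ) 1)] 0) := by
  refine ⟨?_, ?_, ?_, ?_⟩
  · -- linear independence is preserved
    intro t ht f hf
    have heq : (fun i => T t (f i)) = ⇑(Stmt6Aux.PhiL t) ∘ f := by
      funext i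
      exact Stmt6Aux.Phi_eq_T T hT ht.1 (f i)
    rw [heq]
    exact hf.map' (Stmt6Aux.PhiL t)
      (LinearMap.ker_eq_bot.mpr (Stmt6Aux.Phi_injective t ht.1))
  · -- continuity
    have heq : (fun p : Set.Icc (0 : ℝ) 1 × {f : Fin n → Hsp // LinearIndependent ℝ f} =>
        (fun i => T (p.1 : ℝ) ((p.2 : Fin n → Hsp) i) : Fin n → Hsp)) =
        fun p => fun i => Stmt6Aux.Phi (p.1 : ℝ) ((p.2 : Fin n → Hsp) i) := by
      funext p i
      exact Stmt6Aux.Phi_eq_T T hT p.1.2.1 _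
    rw [heq]
    refine continuous_pi fun i => ?_
    exact Stmt6Aux.continuous_Phi.comp
      ((continuous_subtype_val.comp continuous_fst).prodMk
        ((continuous_apply i).comp (continuous_subtype_val.comp continuous_snd)))
  · -- time 0
    intro f
    funext i
    apply MeasureTheory.Lp.ext
    refine (hT 0 le_rfl _).trans ?_
    have hmem : ∀ᵐ x ∂(MeasureTheory.volume.restrict (Set.Ici (0 : ℝ))), x ∈ Set.Ici (0:ℝ) :=
      ae_restrict_mem measurableSet_Ici
    filter_upwards [hmem] with x hx
    have h : ¬ x < (0:ℝ) := not_lt.mpr hx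
    simp [h]
  · -- time 1
    intro f i
    have hmono : MeasureTheory.volume.restrict (Set.Icc (0 : ℝ) 1) ≤
        MeasureTheory.volume.restrict (Set.Ici (0 : ℝ)) :=
      Measure.restrict_mono (fun x hx => hx.1) le_rfl
    have h1 := (hT 1 zero_le_one ((f : Fin n → Hsp) i)).filter_mono (ae_mono hmono)
    have hlt : ∀ᵐ x ∂(MeasureTheory.volume.restrict (Set.Icc (0 : ℝ) 1)), x < 1 := by
      rw [ae_iff, Measure.restrict_apply' measurableSet_Icc]
      refine measure_mono_null (fun x hx => ?_) (measure_singleton (1:ℝ))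
      obtain ⟨hx1, hx2⟩ := hx
      simp only [mem_setOf_eq, not_lt] at hx1
      exact le_antisymm hx2.2 hx1
    filter_upwards [h1, hlt] with x hx hxlt
    rw [hx, if_pos hxlt]
    rfl
end

section
/- Let (g₁,…,gₙ) ∈ E be an n-tuple whose components all vanish almost everywhere outside the interval [0,1], and let (f₁,…,fₙ) ∈ E'. Then for every t ∈ [0,1], the n-tuple (t g₁ + (1−t) f₁, …, t gₙ + (1−t) fₙ) is linearly independent over ℝ, i.e. lies in E. -/
open MeasureTheory Set

private lemma coeFn_finsum {n : ℕ} (s : Finset (Fin n)) (c : Fin n → ℝ) (v : Fin n → Hsp) :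
    ((∑ i ∈ s, c i • v i : Hsp) : ℝ → ℝ)
      =ᵐ[MeasureTheory.volume.restrict (Set.Ici (0 : ℝ))]
      fun x => ∑ i ∈ s, c i * (v i : ℝ → ℝ) x := by
  classical
  induction s using Finset.induction_on with
  | empty =>
    simp only [Finset.sum_empty]
    filter_upwards [MeasureTheory.Lp.coeFn_zero ℝ 2
      (MeasureTheory.volume.restrict (Set.Ici (0 : ℝ)))] with x hx
    simpa using hx
  | insert j s' hj ih =>
    rw [Finset.sum_insert hj]
    filter_upwards [MeasureTheory.Lp.coeFn_add (c j • v j) (∑ i ∈ s', c i • v i),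
      MeasureTheory.Lp.coeFn_smul (c j) (v j), ih] with x h1 h2 h3
    rw [Finset.sum_insert hj, h1, Pi.add_apply, h2, h3, Pi.smul_apply, smul_eq_mul]

/-- If `(g₁,…,gₙ) ∈ E` has all components vanishing a.e. outside
`[0,1]`, and `(f₁,…,fₙ) ∈ E'` (linearly independent with components vanishing
a.e. on `[0,1]`), then for every `t ∈ [0,1]` the tuple
`(t g₁ + (1−t) f₁, …, t gₙ + (1−t) fₙ)` is linearly independent over `ℝ`. -/
theorem stmt7 (n : ℕ) (hn : 1 ≤ n) (g f : Fin n → Hsp)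
    (hgE : LinearIndependent ℝ g)
    (hgsupp : ∀ i, ∀ᵐ x ∂(MeasureTheory.volume.restrict (Set.Ici (0 : ℝ))),
      x ∉ Set.Icc (0 : ℝ) 1 → (g i : ℝ → ℝ) x = 0)
    (hfE : LinearIndependent ℝ f)
    (hfvan : ∀ i, (f i : ℝ → ℝ) =ᵐ[MeasureTheory.volume.restrict (Set.Icc (0 : ℝ) 1)] 0)
    (t : ℝ) (ht : t ∈ Set.Icc (0 : ℝ) 1) :
    LinearIndependent ℝ fun i => t • g i + (1 - t) • f i := by
  classical
  set μ := MeasureTheory.volume.restrict (Set.Ici (0 : ℝ)) with hμ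
  rcases eq_or_ne t 0 with rfl | ht0
  · simpa using hfE
  rw [linearIndependent_iff']
  intro s c hsum i hi
  -- rewrite the sum
  have hsum' : t • (∑ j ∈ s, c j • g j) + (1 - t) • (∑ j ∈ s, c j • f j) = 0 := by
    rw [Finset.smul_sum, Finset.smul_sum, ← Finset.sum_add_distrib, ← hsum]
    refine Finset.sum_congr rfl fun j _ => ?_
    rw [smul_add, smul_comm t (c j), smul_comm (1 - t) (c j)]
  set G : Hsp := ∑ j ∈ s, c j • g j with hG
  set F : Hsp := ∑ j ∈ s, c j • f j with hF
  -- a.e. statement of hsum'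
  have hae : ∀ᵐ x ∂μ, t * (G : ℝ → ℝ) x + (1 - t) * (F : ℝ → ℝ) x = 0 := by
    have h0 : ((0 : Hsp) : ℝ → ℝ) =ᵐ[μ] 0 := MeasureTheory.Lp.coeFn_zero _ _ _
    filter_upwards [MeasureTheory.Lp.coeFn_add (t • G) ((1 - t) • F),
      MeasureTheory.Lp.coeFn_smul t G, MeasureTheory.Lp.coeFn_smul (1 - t) F,
      hsum' ▸ h0] with x h1 h2 h3 h4
    have : ((t • G + (1 - t) • F : Hsp) : ℝ → ℝ) x = 0 := h4
    rw [h1] at this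
    simpa [h2, h3, smul_eq_mul] using this
  -- G vanishes outside Icc 0 1
  have hGsupp : ∀ᵐ x ∂μ, x ∉ Set.Icc (0 : ℝ) 1 → (G : ℝ → ℝ) x = 0 := by
    filter_upwards [coeFn_finsum s c g, MeasureTheory.ae_all_iff.2 hgsupp] with x h1 h2 hx
    rw [h1]
    exact Finset.sum_eq_zero fun j _ => by rw [h2 j hx, mul_zero]
  -- F vanishes on Icc 0 1
  have hFvan : ∀ᵐ x ∂μ, x ∈ Set.Icc (0 : ℝ) 1 → (F : ℝ → ℝ) x = 0 := by
    have hres : μ.restrict (Set.Icc (0 : ℝ) 1)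
        = MeasureTheory.volume.restrict (Set.Icc (0 : ℝ) 1) := by
      rw [hμ, MeasureTheory.Measure.restrict_restrict measurableSet_Icc,
        Set.inter_eq_left.2 (fun x hx => hx.1)]
    have h1 : (F : ℝ → ℝ) =ᵐ[μ.restrict (Set.Icc (0 : ℝ) 1)] 0 := by
      rw [hres]
      have h2 : ∀ᵐ x ∂(MeasureTheory.volume.restrict (Set.Icc (0 : ℝ) 1)),
          ∀ j, (f j : ℝ → ℝ) x = 0 := MeasureTheory.ae_all_iff.2 fun j => hfvan j
      have h3 : (F : ℝ → ℝ) =ᵐ[MeasureTheory.volume.restrict (Set.Icc (0 : ℝ) 1)]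
          fun x => ∑ j ∈ s, c j * (f j : ℝ → ℝ) x := by
        refine (coeFn_finsum s c f).filter_mono ?_
        exact MeasureTheory.ae_mono (by
          rw [← hres]
          exact MeasureTheory.Measure.restrict_le_self)
      filter_upwards [h2, h3] with x h2x h3x
      rw [h3x]
      exact Finset.sum_eq_zero fun j _ => by rw [h2x j, mul_zero]
    exact (MeasureTheory.ae_restrict_iff' measurableSet_Icc).1 h1
  -- conclude G = 0
  have hG0 : G = 0 := by
    refine MeasureTheory.Lp.ext ?_
    filter_upwards [hae, hGsupp, hFvan,
      MeasureTheory.Lp.coeFn_zero ℝ 2 μ] with x h1 h2 h3 h4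
    rw [h4]
    by_cases hx : x ∈ Set.Icc (0 : ℝ) 1
    · have := h3 hx
      rw [this, mul_zero, add_zero] at h1
      simpa using mul_eq_zero.1 h1 |>.resolve_left ht0
    · exact h2 hx
  exact linearIndependent_iff'.1 hgE s c hG0 i hi
end

section
/- E' is contractible to a point within E: there exist a point g ∈ E and a continuous map R : [0,1] × E' → E such that R(0, f) = f for all f ∈ E' and R(1, f) = g for all f ∈ E'. (One may take g = (g₁,…,gₙ) ∈ E with all components vanishing almost everywhere outside [0,1] and R(t, f) = (t g₁ + (1−t) f₁, …, t gₙ + (1−t) fₙ).) -/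
open MeasureTheory Set

noncomputable abbrev nu : Measure ℝ := MeasureTheory.volume.restrict (Set.Ici (0 : ℝ))

lemma Lp_coeFn_sum {ι α E : Type*} [MeasurableSpace α] [NormedAddCommGroup E] {p : ENNReal}
    {μ : Measure α} (s : Finset ι) (f : ι → Lp E p μ) :
    ⇑(∑ i ∈ s, f i) =ᵐ[μ] fun x => ∑ i ∈ s, f i x := by
  classical
  induction s using Finset.induction with
  | empty => simp only [Finset.sum_empty]; exact Lp.coeFn_zero E p μ
  | insert a s h ih =>
    rw [Finset.sum_insert h]
    filter_upwards [Lp.coeFn_add (f a) (∑ i ∈ s, f i), ih] with x hx hx2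
    simp only [Pi.add_apply] at hx
    rw [hx, hx2, Finset.sum_insert h]

def Sset (n : ℕ) (i : Fin n) : Set ℝ := Set.Ioc ((i : ℝ) / n) (((i : ℝ) + 1) / n)

lemma Sset_meas (n : ℕ) (i : Fin n) : MeasurableSet (Sset n i) := measurableSet_Ioc

lemma npos (n : ℕ) (i : Fin n) : (0:ℝ) < n := by
  have : 0 < n := i.pos
  exact_mod_cast this

lemma Sset_subset (n : ℕ) (i : Fin n) : Sset n i ⊆ Set.Ioc 0 1 := by
  have hn := npos n i
  intro x hx
  obtain ⟨h1, h2⟩ := hx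
  constructor
  · have : (0:ℝ) ≤ (i : ℝ) / n := by positivity
    linarith
  · have hi : ((i:ℝ) + 1) ≤ n := by
      have := i.isLt
      exact_mod_cast this
    calc x ≤ ((i:ℝ) + 1) / n := h2
      _ ≤ (n:ℝ) / n := by gcongr
      _ = 1 := div_self hn.ne'

lemma nu_Sset (n : ℕ) (i : Fin n) : nu (Sset n i) = ENNReal.ofReal (1 / n) := by
  have hsub : Sset n i ⊆ Set.Ici (0:ℝ) := fun x hx => le_of_lt (Sset_subset n i hx).1
  rw [nu, Measure.restrict_apply (Sset_meas n i), Set.inter_eq_left.mpr hsub,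
    Sset, Real.volume_Ioc]
  congr 1
  ring

lemma nu_Sset_ne_top (n : ℕ) (i : Fin n) : nu (Sset n i) ≠ ⊤ := by
  rw [nu_Sset]; exact ENNReal.ofReal_ne_top

lemma nu_Sset_ne_zero (n : ℕ) (i : Fin n) : nu (Sset n i) ≠ 0 := by
  rw [nu_Sset]
  have hn := npos n i
  simp only [ne_eq, ENNReal.ofReal_eq_zero, not_le]
  positivity

noncomputable def gfam (n : ℕ) (i : Fin n) : Hsp :=
  indicatorConstLp 2 (Sset_meas n i) (nu_Sset_ne_top n i) (1 : ℝ)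

lemma Sset_disj (n : ℕ) {i j : Fin n} (h : i ≠ j) {x : ℝ} (hx : x ∈ Sset n j) :
    x ∉ Sset n i := by
  have hn := npos n i
  intro hxi
  rcases lt_or_gt_of_ne h with hij | hij
  · have : ((i:ℝ) + 1) ≤ (j:ℝ) := by exact_mod_cast Nat.succ_le_of_lt hij
    have h1 : x ≤ ((i:ℝ)+1)/n := hxi.2
    have h2 : (j:ℝ)/n < x := hx.1
    have : ((i:ℝ)+1)/n ≤ (j:ℝ)/n := by gcongr
    linarith
  · have : ((j:ℝ) + 1) ≤ (i:ℝ) := by exact_mod_cast Nat.succ_le_of_lt hij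
    have h1 : x ≤ ((j:ℝ)+1)/n := hx.2
    have h2 : (i:ℝ)/n < x := hxi.1
    have : ((j:ℝ)+1)/n ≤ (i:ℝ)/n := by gcongr
    linarith

lemma gfam_ae (n : ℕ) (c : Fin n → ℝ) :
    ⇑(∑ i, c i • gfam n i) =ᵐ[nu]
      fun x => ∑ i, c i * (Sset n i).indicator (fun _ => (1:ℝ)) x := by
  have h1 := Lp_coeFn_sum (Finset.univ) (fun i => c i • gfam n i)
  have h2 : ∀ᵐ x ∂nu, ∀ i, (c i • gfam n i) x
      = c i * (Sset n i).indicator (fun _ => (1:ℝ)) x := by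
    rw [MeasureTheory.ae_all_iff]
    intro i
    filter_upwards [Lp.coeFn_smul (c i) (gfam n i),
      indicatorConstLp_coeFn (p := 2) (μ := nu) (hs := Sset_meas n i)
        (hμs := nu_Sset_ne_top n i) (c := (1:ℝ))] with x hx hxi
    rw [hx, Pi.smul_apply, smul_eq_mul]
    rw [gfam, hxi]
  filter_upwards [h1, h2] with x hx hx2
  rw [hx]
  exact Finset.sum_congr rfl fun i _ => hx2 i

/-- Coefficients vanish whenever a combination of the `gfam` is a.e. zero. -/
lemma gfam_comb (n : ℕ) (c : Fin n → ℝ) (h : ⇑(∑ i, c i • gfam n i) =ᵐ[nu] 0) :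
    ∀ j, c j = 0 := by
  classical
  intro j
  have key : ∀ᵐ x ∂nu, x ∈ Sset n j →
      (∑ i, c i * (Sset n i).indicator (fun _ => (1:ℝ)) x) = 0 := by
    filter_upwards [gfam_ae n c, h] with x hx hx0
    intro _
    rw [← hx, hx0]
    rfl
  obtain ⟨x, hxS, hx0⟩ := MeasureTheory.Measure.exists_mem_of_measure_ne_zero_of_ae
    (nu_Sset_ne_zero n j) ((ae_restrict_iff' (Sset_meas n j)).mpr key)
  have : (∑ i, c i * (Sset n i).indicator (fun _ => (1:ℝ)) x) = c j := by
    rw [Finset.sum_eq_single j]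
    · simp [Set.indicator_of_mem hxS]
    · intro i _ hij
      simp [Set.indicator_of_notMem (Sset_disj n hij hxS)]
    · simp
  rw [this] at hx0
  exact hx0

lemma gfam_indep (n : ℕ) : LinearIndependent ℝ (gfam n) := by
  rw [Fintype.linearIndependent_iff]
  intro c hc
  apply gfam_comb n c
  rw [hc]
  exact Lp.coeFn_zero ℝ 2 nu

/-- `E'` is contractible to a point within `E`: there exist a point
`g ∈ E` and a continuous map `R : [0,1] × E' → E` with `R(0,f) = f` and
`R(1,f) = g` for all `f ∈ E'`. -/
theorem stmt8 (n : ℕ) (hn : 1 ≤ n) :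
    ∃ g : Fin n → Hsp, LinearIndependent ℝ g ∧
      ∃ R : Set.Icc (0 : ℝ) 1 ×
          {f : Fin n → Hsp // LinearIndependent ℝ f ∧
            ∀ i, (f i : ℝ → ℝ) =ᵐ[MeasureTheory.volume.restrict (Set.Icc (0 : ℝ) 1)] 0}
          → (Fin n → Hsp),
        Continuous R ∧
        (∀ p, LinearIndependent ℝ (R p)) ∧
        (∀ (t : Set.Icc (0 : ℝ) 1) (f), (t : ℝ) = 0 → R (t, f) = (f : Fin n → Hsp)) ∧
        (∀ (t : Set.Icc (0 : ℝ) 1) (f), (t : ℝ) = 1 → R (t, f) = g) := by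
  classical
  refine ⟨gfam n, gfam_indep n, fun p => fun i =>
    (p.1 : ℝ) • gfam n i + (1 - (p.1 : ℝ)) • (p.2 : Fin n → Hsp) i, ?_, ?_, ?_, ?_⟩
  · apply continuous_pi
    intro i
    have h1 : Continuous fun p : Set.Icc (0:ℝ) 1 ×
        {f : Fin n → Hsp // LinearIndependent ℝ f ∧
          ∀ i, (f i : ℝ → ℝ) =ᵐ[MeasureTheory.volume.restrict (Set.Icc (0:ℝ) 1)] 0} =>
        (p.1 : ℝ) := continuous_subtype_val.comp continuous_fst
    have h2 : Continuous fun p : Set.Icc (0:ℝ) 1 ×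
        {f : Fin n → Hsp // LinearIndependent ℝ f ∧
          ∀ i, (f i : ℝ → ℝ) =ᵐ[MeasureTheory.volume.restrict (Set.Icc (0:ℝ) 1)] 0} =>
        (p.2 : Fin n → Hsp) i :=
      (continuous_apply i).comp (continuous_subtype_val.comp continuous_snd)
    exact (h1.smul continuous_const).add ((continuous_const.sub h1).smul h2)
  · rintro ⟨t, f⟩
    by_cases ht : (t : ℝ) = 0
    · have : (fun i => (t:ℝ) • gfam n i + (1 - (t:ℝ)) • (f : Fin n → Hsp) i)
          = (f : Fin n → Hsp) := by
        funext i; simp [ht]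
      simpa [this] using f.2.1
    · rw [Fintype.linearIndependent_iff]
      intro c hc
      have hsplit : (∑ i, c i • ((t:ℝ) • gfam n i + (1 - (t:ℝ)) • (f : Fin n → Hsp) i))
          = (t:ℝ) • (∑ i, c i • gfam n i) + (1 - (t:ℝ)) • (∑ i, c i • (f : Fin n → Hsp) i) := by
        rw [Finset.smul_sum, Finset.smul_sum, ← Finset.sum_add_distrib]
        congr 1
        funext i
        rw [smul_add, smul_comm (c i) ((t:ℝ)), smul_comm (c i) (1 - (t:ℝ))]
      rw [hsplit] at hc
      set u : Hsp := ∑ i, c i • gfam n i with hu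
      set v : Hsp := ∑ i, c i • (f : Fin n → Hsp) i with hv
      have h0 : ⇑((t:ℝ) • u + (1 - (t:ℝ)) • v) =ᵐ[nu] 0 := by
        rw [hc]; exact Lp.coeFn_zero ℝ 2 nu
      have hcomb : ∀ᵐ x ∂nu, (t:ℝ) * u x + (1 - (t:ℝ)) * v x = 0 := by
        filter_upwards [Lp.coeFn_add ((t:ℝ) • u) ((1 - (t:ℝ)) • v),
          Lp.coeFn_smul ((t:ℝ)) u, Lp.coeFn_smul ((1 - (t:ℝ))) v, h0] with x h1 h2 h3 h4
        rw [h1, Pi.add_apply, h2, h3] at h4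
        simpa using h4
      have huout : ∀ᵐ x ∂nu, x ∉ Set.Icc (0:ℝ) 1 → u x = 0 := by
        filter_upwards [gfam_ae n c] with x hx hxout
        rw [hu, hx]
        apply Finset.sum_eq_zero
        intro i _
        rw [Set.indicator_of_notMem, mul_zero]
        intro hmem
        exact hxout (Set.Ioc_subset_Icc_self (Sset_subset n i hmem))
      have hvin : ∀ᵐ x ∂nu, x ∈ Set.Icc (0:ℝ) 1 → v x = 0 := by
        rw [← ae_restrict_iff' measurableSet_Icc]
        have hres : nu.restrict (Set.Icc (0:ℝ) 1)
            = MeasureTheory.volume.restrict (Set.Icc (0:ℝ) 1) := by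
          rw [nu, Measure.restrict_restrict measurableSet_Icc,
            Set.inter_eq_left.mpr (fun x hx => hx.1)]
        have h1 : ⇑v =ᵐ[nu] fun x => ∑ i, c i * (f : Fin n → Hsp) i x := by
          have hs := Lp_coeFn_sum (Finset.univ) (fun i => c i • (f : Fin n → Hsp) i)
          have h2 : ∀ᵐ x ∂nu, ∀ i, (c i • (f : Fin n → Hsp) i) x
              = c i * (f : Fin n → Hsp) i x := by
            rw [MeasureTheory.ae_all_iff]
            intro i
            filter_upwards [Lp.coeFn_smul (c i) ((f : Fin n → Hsp) i)] with x hx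
            rw [hx]; rfl
          filter_upwards [hs, h2] with x hx hx2
          rw [hv, hx]
          exact Finset.sum_congr rfl fun i _ => hx2 i
        have h1' : ⇑v =ᵐ[nu.restrict (Set.Icc (0:ℝ) 1)]
            fun x => ∑ i, c i * (f : Fin n → Hsp) i x := ae_restrict_of_ae h1
        have h3 : ∀ᵐ x ∂(nu.restrict (Set.Icc (0:ℝ) 1)),
            ∀ i, (f : Fin n → Hsp) i x = 0 := by
          rw [MeasureTheory.ae_all_iff]
          intro i
          rw [hres]
          exact f.2.2 i
        filter_upwards [h1', h3] with x hx hx2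
        rw [hx]
        apply Finset.sum_eq_zero
        intro i _
        rw [hx2 i, mul_zero]
      have hu0 : ⇑u =ᵐ[nu] 0 := by
        filter_upwards [hcomb, huout, hvin] with x h1 h2 h3
        by_cases hx : x ∈ Set.Icc (0:ℝ) 1
        · rw [h3 hx, mul_zero, add_zero] at h1
          have hux : u x = 0 := by
            rcases mul_eq_zero.mp h1 with h | h
            · exact absurd h ht
            · exact h
          exact hux
        · exact h2 hx
      exact gfam_comb n c hu0
  · rintro t ⟨f, hf⟩ ht
    funext i
    simp [ht]
  · rintro t ⟨f, hf⟩ ht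
    funext i
    simp [ht]
end

section
/- The space E is contractible: the identity map of E is homotopic, through continuous maps E → E, to a constant map. -/
set_option maxHeartbeats 1000000
set_option synthInstance.maxHeartbeats 1000000

open MeasureTheory Set Function
open scoped RealInnerProductSpace ENNReal

namespace Stmt9Aux

variable {ι : Type} {g : ι → ι}

lemma ptwise (hg : Function.Injective g) (x : lp (fun _ : ι => ℝ) 2) :
    (fun j => ‖Function.extend g (⇑x) 0 j‖ ^ (2 : ℝ≥0∞).toReal)
      = Function.extend g (fun i => ‖x i‖ ^ (2 : ℝ≥0∞).toReal) 0 := by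
  funext j
  by_cases h : ∃ i, g i = j
  · obtain ⟨i, rfl⟩ := h
    rw [hg.extend_apply, hg.extend_apply]
  · rw [extend_apply' _ _ _ h, extend_apply' _ _ _ h]
    simp

lemma summable_x (x : lp (fun _ : ι => ℝ) 2) :
    Summable fun i => ‖x i‖ ^ (2 : ℝ≥0∞).toReal := by
  have := lp.memℓp x
  exact (memℓp_gen_iff (by norm_num)).1 this

lemma extend_memℓp (hg : Function.Injective g) (x : lp (fun _ : ι => ℝ) 2) :
    Memℓp (Function.extend g (⇑x) 0) 2 := by
  apply memℓp_gen
  rw [ptwise hg x]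
  exact (summable_extend_zero hg).2 (summable_x x)

/-- The "shift along `g`" linear map on `ℓ²(ι)`. -/
noncomputable def shiftL (hg : Function.Injective g) :
    lp (fun _ : ι => ℝ) 2 →ₗ[ℝ] lp (fun _ : ι => ℝ) 2 where
  toFun x := ⟨Function.extend g (⇑x) 0, extend_memℓp hg x⟩
  map_add' x y := by
    apply lp.ext; funext j
    by_cases h : ∃ i, g i = j
    · obtain ⟨i, rfl⟩ := h
      show Function.extend g (⇑(x + y)) 0 (g i) =
        Function.extend g (⇑x) 0 (g i) + Function.extend g (⇑y) 0 (g i)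
      rw [hg.extend_apply, hg.extend_apply, hg.extend_apply, lp.coeFn_add]
      rfl
    · show Function.extend g (⇑(x + y)) 0 j =
        Function.extend g (⇑x) 0 j + Function.extend g (⇑y) 0 j
      rw [extend_apply' _ _ _ h, extend_apply' _ _ _ h, extend_apply' _ _ _ h]
      simp
  map_smul' c x := by
    apply lp.ext; funext j
    by_cases h : ∃ i, g i = j
    · obtain ⟨i, rfl⟩ := h
      show Function.extend g (⇑(c • x)) 0 (g i) = c • Function.extend g (⇑x) 0 (g i)
      rw [hg.extend_apply, hg.extend_apply, lp.coeFn_smul]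
      rfl
    · show Function.extend g (⇑(c • x)) 0 j = c • Function.extend g (⇑x) 0 j
      rw [extend_apply' _ _ _ h, extend_apply' _ _ _ h]
      simp

lemma norm_shiftL (hg : Function.Injective g) (x : lp (fun _ : ι => ℝ) 2) :
    ‖shiftL hg x‖ = ‖x‖ := by
  rw [lp.norm_eq_tsum_rpow (by norm_num) x, lp.norm_eq_tsum_rpow (by norm_num) (shiftL hg x)]
  congr 1
  have h1 : (fun j => ‖(shiftL hg x) j‖ ^ (2 : ℝ≥0∞).toReal)
      = Function.extend g (fun i => ‖x i‖ ^ (2 : ℝ≥0∞).toReal) 0 := ptwise hg x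
  rw [h1]
  exact ((hasSum_extend_zero hg).2 (summable_x x).hasSum).tsum_eq

/-- The shift as a linear isometry. -/
noncomputable def shiftLI (hg : Function.Injective g) :
    lp (fun _ : ι => ℝ) 2 →ₗᵢ[ℝ] lp (fun _ : ι => ℝ) 2 :=
  ⟨shiftL hg, norm_shiftL hg⟩

theorem contractibleAux {H : Type} [NormedAddCommGroup H] [InnerProductSpace ℝ H]
    [CompleteSpace H] {ι : Type} (b : HilbertBasis ι ℝ H) (e : ι × ℕ ≃ ι) (n : ℕ)
    (ch : Fin n ↪ ι) :
    ContractibleSpace {f : Fin n → H // LinearIndependent ℝ f} := by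
  classical
  set g : ι → ι := fun i => e ((e.symm i).1, (e.symm i).2 + 1) with hgdef
  have hg : Function.Injective g := by
    intro a a' haa'
    have h := e.injective haa'
    obtain ⟨h1, h2⟩ := Prod.ext_iff.mp h
    have h2' : (e.symm a).2 = (e.symm a').2 := Nat.succ_injective h2
    exact e.symm.injective (Prod.ext_iff.mpr ⟨h1, h2'⟩)
  have hge : ∀ i k, g (e (i, k)) = e (i, k + 1) := by
    intro i k; simp [hgdef]
  have hnotin : ∀ i : ι, ¬∃ j, g j = e (i, 0) := by
    rintro i ⟨j, hj⟩
    have h := e.injective hj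
    exact Nat.succ_ne_zero _ (Prod.ext_iff.mp h).2
  set S : H →L[ℝ] H :=
    (b.repr.symm.toLinearIsometry.comp
      ((shiftLI hg).comp b.repr.toLinearIsometry)).toContinuousLinearMap with hSdef
  have hSrepr : ∀ v, b.repr (S v) = shiftLI hg (b.repr v) := by
    intro v; simp [hSdef]
  have hcoord0 : ∀ v (i : ι), b.repr (S v) (e (i, 0)) = 0 := by
    intro v i
    rw [hSrepr]
    exact extend_apply' _ _ _ (hnotin i)
  have hcoordS : ∀ v (i : ι) (k : ℕ), b.repr (S v) (e (i, k + 1)) = b.repr v (e (i, k)) := by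
    intro v i k
    rw [hSrepr, ← hge i k]
    exact hg.extend_apply _ _ _
  -- injectivity of (1-t) + t S
  have hinj : ∀ t : ℝ, 0 ≤ t → t ≤ 1 → ∀ v : H, (1 - t) • v + t • S v = 0 → v = 0 := by
    intro t ht0 ht1 v hv
    have hx : (1 - t) • b.repr v + t • b.repr (S v) = 0 := by
      have h := congrArg b.repr hv
      simpa [map_add, LinearIsometryEquiv.map_smul] using h
    have hxj : ∀ j, (1 - t) * b.repr v j + t * b.repr (S v) j = 0 := by
      intro j
      have h := congrArg (fun y : lp (fun _ : ι => ℝ) 2 => y j) hx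
      exact h
    have hvz : ∀ p : ι × ℕ, b.repr v (e p) = 0 := by
      by_cases ht : t = 1
      · subst ht
        -- equations give b.repr (S v) = 0 pointwise, i.e. shifted coords of v vanish
        rintro ⟨i, k⟩
        have h := hxj (e (i, k + 1))
        rw [hcoordS] at h
        simpa using h
      · have h1t : (1 : ℝ) - t ≠ 0 := sub_ne_zero.2 (Ne.symm ht)
        rintro ⟨i, k⟩
        induction k with
        | zero =>
            have h := hxj (e (i, 0))
            rw [hcoord0] at h
            have : (1 - t) * b.repr v (e (i, 0)) = 0 := by linarith
            exact (mul_eq_zero.mp this).resolve_left h1t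
        | succ k ih =>
            have h := hxj (e (i, k + 1))
            rw [hcoordS, ih] at h
            have : (1 - t) * b.repr v (e (i, k + 1)) = 0 := by linarith
            exact (mul_eq_zero.mp this).resolve_left h1t
    have hrv : b.repr v = 0 := by
      apply lp.ext; funext j
      obtain ⟨p, rfl⟩ := e.surjective j
      simpa using hvz p
    have := congrArg b.repr.symm hrv
    simpa using this
  have hSinj : ∀ v : H, S v = 0 → v = 0 := by
    intro v hv
    exact hinj 1 zero_le_one le_rfl v (by simp [hv])
  -- the distinguished orthonormal tuple
  set wv : Fin n → H := fun i => b (e (ch i, 0)) with hwvdef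
  have hwinner : ∀ (i : Fin n) (v : H), (inner ℝ (wv i) (S v) : ℝ) = 0 := by
    intro i v
    rw [hwvdef]
    simp only
    rw [← b.repr_apply_apply]
    exact hcoord0 v (ch i)
  have hwon : Orthonormal ℝ wv := by
    apply b.orthonormal.comp
    intro i j hij
    have h := e.injective hij
    exact ch.injective (congrArg Prod.fst h)
  have hwLI : LinearIndependent ℝ wv := hwon.linearIndependent
  -- stage 1 linear independence
  have stage1LI : ∀ t : ℝ, 0 ≤ t → t ≤ 1 → ∀ f : Fin n → H, LinearIndependent ℝ f →
      LinearIndependent ℝ fun i => (1 - t) • f i + t • S (f i) := by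
    intro t ht0 ht1 f hf
    set A : H →ₗ[ℝ] H := (1 - t) • LinearMap.id + t • (S : H →ₗ[ℝ] H) with hAdef
    have hA : (fun i => (1 - t) • f i + t • S (f i)) = ⇑A ∘ f := by
      funext i
      simp [hAdef]
    rw [hA]
    refine hf.map' A (LinearMap.ker_eq_bot'.mpr ?_)
    intro m hm
    refine hinj t ht0 ht1 m ?_
    simpa [hAdef] using hm
  -- stage 2 linear independence
  have stage2LI : ∀ t : ℝ, 0 ≤ t → t ≤ 1 → ∀ f : Fin n → H, LinearIndependent ℝ f →
      LinearIndependent ℝ fun i => t • wv i + (1 - t) • S (f i) := by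
    intro t ht0 ht1 f hf
    rw [Fintype.linearIndependent_iff]
    intro a ha
    set u : H := ∑ i, a i • wv i with hudef
    set z : H := ∑ i, a i • f i with hzdef
    have hsum : t • u + (1 - t) • S z = 0 := by
      rw [← ha, hudef, hzdef, map_sum, Finset.smul_sum, Finset.smul_sum,
        ← Finset.sum_add_distrib]
      apply Finset.sum_congr rfl
      intro i _
      rw [S.map_smul]
      rw [smul_comm t (a i), smul_comm (1 - t) (a i), ← smul_add]
    have hz_of : z = 0 → ∀ i, a i = 0 := fun hz =>
      Fintype.linearIndependent_iff.mp hf a (by rw [← hzdef]; exact hz)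
    by_cases ht : t = 0
    · subst ht
      have hSz : S z = 0 := by
        have := hsum
        simpa using this
      exact hz_of (hSinj z hSz)
    · have hin : ∀ j : Fin n, (inner ℝ (wv j) u : ℝ) = 0 := by
        intro j
        have h0 := congrArg (fun y => (inner ℝ (wv j) y : ℝ)) hsum
        simp only [inner_add_right, inner_smul_right, hwinner j z, inner_zero_right,
          mul_zero, add_zero] at h0
        exact (mul_eq_zero.mp h0).resolve_left ht
      have hu : u = 0 := by
        have h : (inner ℝ u u : ℝ) = 0 := by
          rw [hudef]
          rw [sum_inner]
          apply Finset.sum_eq_zero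
          intro j _
          rw [real_inner_smul_left]
          rw [← hudef, hin j, mul_zero]
        exact inner_self_eq_zero.mp h
      by_cases ht1' : t = 1
      · subst ht1'
        exact Fintype.linearIndependent_iff.mp hwLI a hu
      · have h1t : (1 : ℝ) - t ≠ 0 := sub_ne_zero.2 (Ne.symm ht1')
        have hSz : S z = 0 := by
          rw [hu, smul_zero, zero_add] at hsum
          exact (smul_eq_zero.mp hsum).resolve_left h1t
        exact hz_of (hSinj z hSz)
  -- now build the homotopies
  set Et := {f : Fin n → H // LinearIndependent ℝ f} with hEt
  have contFi : ∀ i : Fin n, Continuous fun f : Et => f.1 i := fun i =>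
    (continuous_apply i).comp continuous_subtype_val
  let M1 : C(Et, Et) :=
    ⟨fun f => ⟨fun i => S (f.1 i), by
      refine f.2.map' (S : H →ₗ[ℝ] H) (LinearMap.ker_eq_bot'.mpr ?_)
      intro m hm
      exact hSinj m hm⟩,
      by
        refine Continuous.subtype_mk (continuous_pi fun i => ?_) _
        exact S.continuous.comp (contFi i)⟩
  let y0 : Et := ⟨wv, hwLI⟩
  let F : ContinuousMap.Homotopy (ContinuousMap.id Et) M1 :=
    { toFun := fun p =>
        ⟨fun i => (1 - (p.1 : ℝ)) • p.2.1 i + (p.1 : ℝ) • S (p.2.1 i),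
          stage1LI _ p.1.2.1 p.1.2.2 _ p.2.2⟩
      continuous_toFun := by
        refine Continuous.subtype_mk (continuous_pi fun i => ?_) _
        have hc : Continuous fun p : unitInterval × Et => (p.1 : ℝ) :=
          continuous_subtype_val.comp continuous_fst
        have hx : Continuous fun p : unitInterval × Et => p.2.1 i :=
          (contFi i).comp continuous_snd
        exact ((continuous_const.sub hc).smul hx).add
          (hc.smul (S.continuous.comp hx))
      map_zero_left := by
        intro f
        apply Subtype.ext
        funext i
        simp
      map_one_left := by
        intro f
        apply Subtype.ext
        funext i
        simp [M1] }
  let G : ContinuousMap.Homotopy M1 (ContinuousMap.const Et y0) :=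
    { toFun := fun p =>
        ⟨fun i => (p.1 : ℝ) • wv i + (1 - (p.1 : ℝ)) • S (p.2.1 i),
          stage2LI _ p.1.2.1 p.1.2.2 _ p.2.2⟩
      continuous_toFun := by
        refine Continuous.subtype_mk (continuous_pi fun i => ?_) _
        have hc : Continuous fun p : unitInterval × Et => (p.1 : ℝ) :=
          continuous_subtype_val.comp continuous_fst
        have hx : Continuous fun p : unitInterval × Et => p.2.1 i :=
          (contFi i).comp continuous_snd
        exact (hc.smul continuous_const).add
          ((continuous_const.sub hc).smul (S.continuous.comp hx))
      map_zero_left := by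
        intro f
        apply Subtype.ext
        funext i
        simp [M1]
      map_one_left := by
        intro f
        apply Subtype.ext
        funext i
        simp [y0] }
  rw [contractible_iff_id_nullhomotopic]
  exact ⟨y0, ⟨F.trans G⟩⟩

/-- An infinite orthonormal family in `Hsp`. -/
lemma existsOrthonormalNat : ∃ v : ℕ → Hsp, Orthonormal ℝ v := by
  have hmeas : ∀ k : ℕ, MeasurableSet (Ico (k : ℝ) (k + 1)) := fun k => measurableSet_Ico
  have hμ : ∀ k : ℕ, (volume.restrict (Ici (0 : ℝ))) (Ico (k : ℝ) (k + 1)) = 1 := by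
    intro k
    rw [Measure.restrict_apply (hmeas k)]
    have hsub : Ico (k : ℝ) (k + 1) ⊆ Ici 0 := fun x hx =>
      le_trans (by positivity) hx.1
    rw [inter_eq_left.mpr hsub]
    simp
  have hμ' : ∀ k : ℕ, (volume.restrict (Ici (0 : ℝ))) (Ico (k : ℝ) (k + 1)) ≠ ∞ := fun k => by
    rw [hμ k]; exact ENNReal.one_ne_top
  refine ⟨fun k => indicatorConstLp 2 (hmeas k) (hμ' k) (1 : ℝ), ?_⟩
  rw [orthonormal_iff_ite]
  intro j k
  rw [L2.inner_indicatorConstLp_one (hmeas j) (hμ' j)]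
  rw [setIntegral_indicatorConstLp (hmeas j) (hmeas k) (hμ' k) (1 : ℝ)]
  by_cases hjk : j = k
  · subst hjk
    rw [inter_self, measureReal_def, hμ j]
    simp
  · have hdisj : Ico (k : ℝ) (k + 1) ∩ Ico (j : ℝ) (j + 1) = ∅ := by
      rw [Set.eq_empty_iff_forall_notMem]
      rintro x ⟨⟨hk1, hk2⟩, ⟨hj1, hj2⟩⟩
      rcases lt_or_gt_of_ne hjk with h | h
      · have : (j : ℝ) + 1 ≤ k := by exact_mod_cast Nat.succ_le_of_lt h
        linarith
      · have : (k : ℝ) + 1 ≤ j := by exact_mod_cast Nat.succ_le_of_lt h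
        linarith
    rw [hdisj]
    simp [hjk]

end Stmt9Aux

open Stmt9Aux in
/-- The space `E` of linearly independent `n`-tuples in `Hⁿ`
(with the subspace topology of the product topology) is contractible:
the identity map of `E` is homotopic to a constant map. -/
theorem stmt9 (n : ℕ) (hn : 1 ≤ n) :
    ContractibleSpace {f : Fin n → Hsp // LinearIndependent ℝ f} := by
  obtain ⟨w, b, hb⟩ := exists_hilbertBasis ℝ Hsp
  haveI : Infinite ↥w := by
    by_contra hinf
    haveI : Finite ↥w := not_infinite_iff_finite.mp hinf
    haveI : Fintype ↥w := Fintype.ofFinite _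
    have hfd : FiniteDimensional ℝ Hsp := by
      have hfin : (Set.range ⇑b).Finite := Set.finite_range _
      have hspan : FiniteDimensional ℝ (Submodule.span ℝ (Set.range ⇑b)) :=
        FiniteDimensional.span_of_finite ℝ hfin
      have hclosed : IsClosed ((Submodule.span ℝ (Set.range ⇑b)) : Set Hsp) :=
        Submodule.closed_of_finiteDimensional _
      have htop : Submodule.span ℝ (Set.range ⇑b) = ⊤ := by
        have hd := b.dense_span
        rwa [IsClosed.submodule_topologicalClosure_eq hclosed] at hd
      rw [htop] at hspan
      exact Module.Finite.equiv (Submodule.topEquiv)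
    obtain ⟨v, hv⟩ := existsOrthonormalNat
    have := hv.linearIndependent.lt_aleph0_of_finiteDimensional
    simp at this
  have hcard : Cardinal.mk (↥w × ℕ) = Cardinal.mk ↥w := by
    rw [Cardinal.mk_prod, Cardinal.lift_id, Cardinal.lift_id, Cardinal.mk_nat]
    exact Cardinal.mul_aleph0_eq (Cardinal.aleph0_le_mk _)
  obtain ⟨e⟩ := Cardinal.eq.mp hcard
  exact contractibleAux b e n ((Fin.valEmbedding).trans (Infinite.natEmbedding ↥w))
end

section
/- Let (v_k)_{k∈ℕ} be a Hilbert (orthonormal) basis of H. If (f₁,…,fₙ) ∈ Hⁿ is linearly independent over ℝ, then there exist indices i₁ < i₂ < … < iₙ in ℕ such that the n×n real matrix whose (j,k)-entry is the inner product ⟪f_j, v_{i_k}⟫ is invertible. Equivalently, the sets U_I, as I ranges over n-element subsets of ℕ, cover E. -/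
open MeasureTheory Set Matrix

section Aux

open FiniteDimensional Module

/-- The evaluation-at-`i` functional composed with the coefficient combination. -/
private noncomputable def Lfun {n : ℕ} (g : Fin n → ℕ → ℝ) (i : ℕ) :
    (Fin n → ℝ) →ₗ[ℝ] ℝ where
  toFun a := ∑ j, a j * g j i
  map_add' a b := by simp [add_mul, Finset.sum_add_distrib]
  map_smul' c a := by simp [Finset.mul_sum, mul_assoc]

private noncomputable def Ksub {n : ℕ} (g : Fin n → ℕ → ℝ) (s : Finset ℕ) :
    Submodule ℝ (Fin n → ℝ) :=
  ⨅ i ∈ s, LinearMap.ker (Lfun g i)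

private lemma mem_Ksub {n : ℕ} {g : Fin n → ℕ → ℝ} {s : Finset ℕ} {a : Fin n → ℝ} :
    a ∈ Ksub g s ↔ ∀ i ∈ s, ∑ j, a j * g j i = 0 := by
  simp [Ksub, Lfun, LinearMap.mem_ker]

/-- Step 1: a linearly independent family of functions `ℕ → ℝ` restricts to a linearly
independent family on some finite set of points. -/
private lemma exists_finset_ksub_bot {n : ℕ} (g : Fin n → ℕ → ℝ)
    (hg : LinearIndependent ℝ g) : ∃ t : Finset ℕ, Ksub g t = ⊥ := by
  suffices H : ∀ d : ℕ, ∀ s : Finset ℕ, Module.finrank ℝ (Ksub g s) = d →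
      ∃ t : Finset ℕ, Ksub g t = ⊥ by
    exact H _ ∅ rfl
  intro d
  induction d using Nat.strong_induction_on with
  | _ d ih =>
    intro s hs
    by_cases hbot : Ksub g s = ⊥
    · exact ⟨s, hbot⟩
    · obtain ⟨a, ha, ha0⟩ := Submodule.exists_mem_ne_zero_of_ne_bot hbot
      have hsum : ∑ j, a j • g j ≠ 0 := by
        intro hc
        exact ha0 (funext fun j =>
          Fintype.linearIndependent_iff.mp hg a hc j)
      have : ∃ i : ℕ, ∑ j, a j * g j i ≠ 0 := by
        by_contra hc
        push_neg at hc
        apply hsum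
        funext i
        simpa using hc i
      obtain ⟨i, hi⟩ := this
      have hlt : Ksub g (insert i s) < Ksub g s := by
        refine lt_of_le_of_ne ?_ ?_
        · exact le_iInf₂ fun k hk =>
            (iInf₂_le (α := Submodule ℝ (Fin n → ℝ)) k (Finset.mem_insert_of_mem hk)).trans le_rfl
        · intro heq
          have : a ∈ Ksub g (insert i s) := heq ▸ ha
          exact hi ((mem_Ksub.mp this) i (Finset.mem_insert_self i s))
      have hfr : Module.finrank ℝ (Ksub g (insert i s)) < d :=
        hs ▸ Submodule.finrank_lt_finrank_of_lt hlt
      exact ih _ hfr (insert i s) rfl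

/-- Step 2: a linearly independent family of `n` vectors in a finite-dimensional
function space admits `n` coordinates with invertible evaluation matrix. -/
private lemma exists_inj_isUnit {n : ℕ} {m : Type*} [Fintype m] [DecidableEq m]
    (h : Fin n → m → ℝ) (hh : LinearIndependent ℝ h) :
    ∃ idx : Fin n → m, Function.Injective idx ∧
      IsUnit (Matrix.of fun j k : Fin n => h j (idx k)) := by
  classical
  set M : Matrix (Fin n) m ℝ := Matrix.of h with hM
  have hrank : M.rank = n := by
    have := LinearIndependent.rank_matrix (M := M) hh
    simpa using this
  have hspan : Submodule.span ℝ (Set.range Mᵀ) = ⊤ := by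
    apply Submodule.eq_top_of_finrank_eq
    change finrank ℝ (Submodule.span ℝ (Set.range M.col)) = _
    rw [← Matrix.rank_eq_finrank_span_cols, hrank, Module.finrank_fintype_fun_eq_card,
      Fintype.card_fin]
  obtain ⟨b, hbsub, hbspan, hbind⟩ := exists_linearIndependent ℝ (Set.range Mᵀ)
  have hbfin : b.Finite := Set.Finite.subset (Set.finite_range Mᵀ) hbsub
  haveI : Fintype b := hbfin.fintype
  -- b is a basis of Fin n → ℝ
  let B : Module.Basis b ℝ (Fin n → ℝ) := Module.Basis.mk hbind (by rw [Subtype.range_coe, hbspan, hspan])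
  have hcard : Fintype.card b = n := by
    have := Module.finrank_eq_card_basis B
    simpa [Module.finrank_fintype_fun_eq_card] using this.symm
  let e : Fin n ≃ b := (Fintype.equivFinOfCardEq hcard).symm
  -- choose preimages
  have hpre : ∀ k : Fin n, ∃ i : m, Mᵀ i = (e k : Fin n → ℝ) := fun k => hbsub (e k).2
  choose idx hidx using hpre
  refine ⟨idx, ?_, ?_⟩
  · intro k₁ k₂ hk
    have : (e k₁ : Fin n → ℝ) = (e k₂ : Fin n → ℝ) := by
      rw [← hidx, ← hidx, hk]
    exact e.injective (Subtype.ext this)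
  · rw [← Matrix.linearIndependent_cols_iff_isUnit]
    have hcols : (fun k : Fin n => (Matrix.of fun j k : Fin n => h j (idx k))ᵀ k)
        = fun k : Fin n => (e k : Fin n → ℝ) := by
      funext k
      have := hidx k
      funext j
      exact congrFun this j
    show LinearIndependent ℝ (fun k : Fin n => (Matrix.of fun j k : Fin n => h j (idx k))ᵀ k)
    rw [hcols]
    exact hbind.comp (fun k => e k) (fun _ _ hk => e.injective hk)

end Aux

/-- Let `(v_k)` be a Hilbert (orthonormal) basis of `H`.
If `(f₁,…,fₙ)` is linearly independent over `ℝ`, then there exist indices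
`i₁ < … < iₙ` such that the `n×n` matrix with entries `⟪f_j, v_{i_k}⟫` is
invertible; equivalently the sets `U_I` cover `E`. -/
theorem stmt10 (n : ℕ) (hn : 1 ≤ n) (v : HilbertBasis ℕ ℝ Hsp)
    (f : Fin n → Hsp) (hf : LinearIndependent ℝ f) :
    ∃ idx : Fin n → ℕ, StrictMono idx ∧
      IsUnit (Matrix.of fun j k : Fin n => (inner ℝ (f j) (v (idx k)) : ℝ)) := by
  classical
  set g : Fin n → ℕ → ℝ := fun j i => (inner ℝ (v i) (f j) : ℝ) with hg
  have hgind : LinearIndependent ℝ g := by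
    rw [Fintype.linearIndependent_iff]
    intro a ha
    have hF : (∑ j, a j • f j) = 0 := by
      apply v.repr.injective
      rw [map_zero]
      ext i
      have : (v.repr (∑ j, a j • f j)) i = ∑ j, a j * g j i := by
        rw [v.repr_apply_apply]
        rw [inner_sum]
        refine Finset.sum_congr rfl fun j _ => ?_
        rw [real_inner_smul_right]
      rw [this]
      have := congrFun ha i
      simpa using this
    exact Fintype.linearIndependent_iff.mp hf a hF
  obtain ⟨t, ht⟩ := exists_finset_ksub_bot g hgind
  -- the restricted family is linearly independent
  have hrind : LinearIndependent ℝ (fun j => fun i : t => g j (i : ℕ)) := by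
    rw [Fintype.linearIndependent_iff]
    intro a ha
    have hmem : a ∈ Ksub g t := by
      rw [mem_Ksub]
      intro i hi
      have := congrFun ha ⟨i, hi⟩
      simpa [mul_comm] using this
    rw [ht] at hmem
    intro j
    exact congrFun (Submodule.mem_bot ℝ |>.mp hmem) j
  obtain ⟨idx0, hinj, hunit⟩ := exists_inj_isUnit (fun j => fun i : t => g j (i : ℕ)) hrind
  -- sort the indices
  let idx1 : Fin n → ℕ := fun k => ((idx0 k : t) : ℕ)
  have hinj1 : Function.Injective idx1 := fun k₁ k₂ hk =>
    hinj (Subtype.ext hk)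
  let σ : Equiv.Perm (Fin n) := Tuple.sort idx1
  have hmono : Monotone (idx1 ∘ σ) := Tuple.monotone_sort idx1
  refine ⟨idx1 ∘ σ, ?_, ?_⟩
  · exact hmono.strictMono_of_injective (hinj1.comp σ.injective)
  · rw [← Matrix.linearIndependent_cols_iff_isUnit]
    rw [← Matrix.linearIndependent_cols_iff_isUnit] at hunit
    have hcols : (fun k : Fin n =>
        (Matrix.of fun j k : Fin n => (inner ℝ (f j) (v ((idx1 ∘ σ) k)) : ℝ))ᵀ k)
        = (fun k : Fin n =>
          (Matrix.of fun j k : Fin n => (fun j' => fun i : t => g j' (i : ℕ)) j (idx0 k))ᵀ k) ∘ σ := by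
      funext k
      funext j
      simp only [Matrix.transpose_apply, Matrix.of_apply, Function.comp_apply]
      rw [hg]
      exact real_inner_comm _ _
    show LinearIndependent ℝ (fun k : Fin n =>
        (Matrix.of fun j k : Fin n => (inner ℝ (f j) (v ((idx1 ∘ σ) k)) : ℝ))ᵀ k)
    rw [hcols]
    exact (linearIndependent_equiv σ).mpr hunit
end

section
/- The quotient map p : E → E/GL(n,ℝ) is a locally trivial principal GL(n,ℝ)-bundle: every point of the orbit space E/GL(n,ℝ) has an open neighborhood V together with a homeomorphism φ : p⁻¹(V) → GL(n,ℝ) × V such that the second component of φ equals p and φ is GL(n,ℝ)-equivariant, i.e. if φ(f) = (g_f, p(f)) then φ(h · f) = (h g_f, p(f)) for all h ∈ GL(n,ℝ). (Explicitly, over p(U_I) one may take φ(f) = (g_f, p(f)) where f = g_f · f' is the unique factorization with (⟪f'_j, v_{i_k}⟫)_{j,k} the identity matrix.) -/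
open MeasureTheory Set

/-- The group `GL(n,ℝ)`. -/
abbrev GLn (n : ℕ) : Type := Matrix.GeneralLinearGroup (Fin n) ℝ

/-- `E ⊆ Hⁿ`: the space of `ℝ`-linearly independent `n`-tuples, with the
subspace topology of the product topology. -/
abbrev Esp (n : ℕ) : Type := {f : Fin n → Hsp // LinearIndependent ℝ f}

/-- `GL(n,ℝ)` acts on `E` by `(g · (f₁,…,fₙ))ᵢ = Σⱼ aᵢⱼ fⱼ`
(this action is free, by Statement 2). -/
noncomputable instance glMulActionE (n : ℕ) : MulAction (GLn n) (Esp n) where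
  smul g f := ⟨fun i => ∑ j, ((g : Matrix (Fin n) (Fin n) ℝ) i j) • (f : Fin n → Hsp) j,
    by
      have hf := f.2
      rw [Fintype.linearIndependent_iff] at hf ⊢
      intro c hc
      have key : ∀ j, (∑ i, c i * (g : Matrix (Fin n) (Fin n) ℝ) i j) = 0 := by
        apply hf
        calc ∑ j, (∑ i, c i * (g : Matrix (Fin n) (Fin n) ℝ) i j) • (f : Fin n → Hsp) j
            = ∑ i, c i • ∑ j, ((g : Matrix (Fin n) (Fin n) ℝ) i j) • (f : Fin n → Hsp) j := by
              simp only [Finset.sum_smul, Finset.smul_sum, smul_smul]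
              rw [Finset.sum_comm]
          _ = 0 := hc
      have hv : Matrix.vecMul c (g : Matrix (Fin n) (Fin n) ℝ) = 0 := by
        funext j; simpa [Matrix.vecMul, dotProduct] using key j
      intro i
      have hc0 : c = 0 := by
        have h2 := congrArg
          (fun v => Matrix.vecMul v ((g⁻¹ : GLn n) : Matrix (Fin n) (Fin n) ℝ)) hv
        simp only [Matrix.vecMul_vecMul, Units.mul_inv, Matrix.vecMul_one,
          Matrix.zero_vecMul] at h2
        exact h2
      simp [hc0]⟩
  one_smul f := Subtype.ext (funext fun i => by
    show ∑ j, ((1 : GLn n) : Matrix (Fin n) (Fin n) ℝ) i j • (f : Fin n → Hsp) j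
      = (f : Fin n → Hsp) i
    simp [Matrix.one_apply, ite_smul])
  mul_smul g h f := Subtype.ext (funext fun i => by
    show ∑ j, ((g * h : GLn n) : Matrix (Fin n) (Fin n) ℝ) i j • (f : Fin n → Hsp) j
      = ∑ j, (g : Matrix (Fin n) (Fin n) ℝ) i j •
          ∑ k, (h : Matrix (Fin n) (Fin n) ℝ) j k • (f : Fin n → Hsp) k
    simp only [Matrix.GeneralLinearGroup.coe_mul, Matrix.mul_apply, Finset.sum_smul,
      Finset.smul_sum, smul_smul]
    rw [Finset.sum_comm])

/-- The action is indeed `(g · (f₁,…,fₙ))ᵢ = Σⱼ aᵢⱼ fⱼ`. -/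
theorem glMulActionE_smul_def (n : ℕ) (g : GLn n) (f : Esp n) :
    ((g • f : Esp n) : Fin n → Hsp)
      = fun i => ∑ j, ((g : Matrix (Fin n) (Fin n) ℝ) i j) • (f : Fin n → Hsp) j :=
  rfl

/-- The orbit space `E/GL(n,ℝ)` with the quotient topology. -/
abbrev QEsp (n : ℕ) : Type := Quotient (MulAction.orbitRel (GLn n) (Esp n))

/-- The quotient map `p : E → E/GL(n,ℝ)`. -/
noncomputable def pq (n : ℕ) : Esp n → QEsp n := Quotient.mk (MulAction.orbitRel (GLn n) (Esp n))


namespace Stmt13Aux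

open Topology

variable {n : ℕ}

/-- The matrix of inner products against a fixed tuple `f0`. -/
noncomputable def Mf (f0 : Esp n) (f : Esp n) : Matrix (Fin n) (Fin n) ℝ :=
  Matrix.of fun j k => (inner ℝ ((f : Fin n → Hsp) j) ((f0 : Fin n → Hsp) k) : ℝ)

theorem Mf_smul (f0 : Esp n) (g : GLn n) (f : Esp n) :
    Mf f0 (g • f) = (g : Matrix (Fin n) (Fin n) ℝ) * Mf f0 f := by
  ext j k
  show (inner ℝ (((g • f : Esp n) : Fin n → Hsp) j) ((f0 : Fin n → Hsp) k) : ℝ)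
      = ((g : Matrix (Fin n) (Fin n) ℝ) * Mf f0 f) j k
  rw [glMulActionE_smul_def]
  simp only [Matrix.mul_apply, Mf, Matrix.of_apply]
  rw [sum_inner]
  simp [real_inner_smul_left]

theorem Mf_self_det_ne_zero (f0 : Esp n) : (Mf f0 f0).det ≠ 0 := by
  intro hdet
  obtain ⟨c, hc0, hc⟩ := Matrix.exists_vecMul_eq_zero_iff.mpr hdet
  set v : Hsp := ∑ j, c j • (f0 : Fin n → Hsp) j with hv
  have hvk : ∀ k, (inner ℝ v ((f0 : Fin n → Hsp) k) : ℝ) = 0 := by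
    intro k
    have := congrFun hc k
    simp only [Matrix.vecMul, dotProduct, Mf, Matrix.of_apply] at this
    rw [hv, sum_inner]
    simpa [real_inner_smul_left] using this
  have hv0 : v = 0 := by
    rw [← inner_self_eq_zero (𝕜 := ℝ)]
    nth_rewrite 2 [hv]
    rw [inner_sum]
    simp [real_inner_smul_right, hvk]
  have hf := f0.2
  rw [Fintype.linearIndependent_iff] at hf
  exact hc0 (funext (hf c (by rw [← hv, hv0])))

theorem cont_Mf (f0 : Esp n) : Continuous fun f : Esp n => Mf f0 f :=
  continuous_matrix fun j k => by
    simp only [Mf, Matrix.of_apply]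
    exact Continuous.inner ((continuous_apply j).comp continuous_subtype_val) continuous_const

/-- Joint continuity of the action. -/
theorem cont_smul : Continuous fun p : GLn n × Esp n => p.1 • p.2 := by
  apply Continuous.subtype_mk
  refine continuous_pi fun i => continuous_finset_sum _ fun j _ => Continuous.fun_smul ?_ ?_
  · exact Continuous.matrix_elem
      ((Units.continuous_val (M := Matrix (Fin n) (Fin n) ℝ)).comp continuous_fst) i j
  · exact (continuous_apply j).comp (continuous_subtype_val.comp continuous_snd)

instance : ContinuousConstSMul (GLn n) (Esp n) :=
  ⟨fun g => cont_smul.comp (continuous_const.prodMk continuous_id)⟩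

theorem pq_smul (g : GLn n) (f : Esp n) : pq n (g • f) = pq n f :=
  Quotient.sound ⟨g, rfl⟩

theorem pq_eq_iff {f f' : Esp n} : pq n f = pq n f' ↔ ∃ g : GLn n, g • f' = f := by
  constructor
  · intro h
    exact Quotient.exact h
  · rintro ⟨g, rfl⟩
    exact pq_smul g f'

/-- The basic open set determined by `f0`. -/
def U (f0 : Esp n) : Set (Esp n) := {f | (Mf f0 f).det ≠ 0}

theorem isOpen_U (f0 : Esp n) : IsOpen (U f0) :=
  isOpen_ne.preimage (cont_Mf f0).matrix_det

theorem mem_U_smul {f0 f : Esp n} (g : GLn n) (hf : f ∈ U f0) : g • f ∈ U f0 := by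
  show (Mf f0 (g • f)).det ≠ 0
  rw [Mf_smul, Matrix.det_mul]
  exact mul_ne_zero (((Matrix.isUnit_iff_isUnit_det _).mp g.isUnit).ne_zero) hf

/-- The open set `V = p(U)` in the quotient. -/
def Vs (f0 : Esp n) : Set (QEsp n) := pq n '' U f0

theorem preimage_Vs (f0 : Esp n) : pq n ⁻¹' Vs f0 = U f0 := by
  ext f
  constructor
  · rintro ⟨u, hu, hpu⟩
    obtain ⟨g, rfl⟩ := pq_eq_iff.mp hpu
    have := mem_U_smul g⁻¹ hu
    rwa [inv_smul_smul] at this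
  · intro hf
    exact ⟨f, hf, rfl⟩

/-- The group element associated to `f ∈ U f0`. -/
noncomputable def Gu (f0 f : Esp n) (h : f ∈ U f0) : GLn n :=
  Matrix.GeneralLinearGroup.mkOfDetNeZero (Mf f0 f) h

theorem Gu_val (f0 f : Esp n) (h : f ∈ U f0) :
    (Gu f0 f h : Matrix (Fin n) (Fin n) ℝ) = Mf f0 f := rfl

/-- The normalized representative in the orbit of `f`. -/
noncomputable def norm0 (f0 f : Esp n) (h : f ∈ U f0) : Esp n :=
  (Gu f0 f h)⁻¹ • f

theorem Mf_norm0 (f0 f : Esp n) (h : f ∈ U f0) : Mf f0 (norm0 f0 f h) = 1 := by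
  rw [norm0, Mf_smul, ← Gu_val f0 f h]
  exact Units.inv_mul _

theorem norm0_unique (f0 f f' : Esp n) (h : f ∈ U f0) (h' : f' ∈ U f0)
    (hpq : pq n f = pq n f') : norm0 f0 f h = norm0 f0 f' h' := by
  obtain ⟨g, rfl⟩ := pq_eq_iff.mp hpq
  have hG : Gu f0 (g • f') (mem_U_smul g h') = g * Gu f0 f' h' := by
    apply Units.ext
    rw [Gu_val, Mf_smul]
    rfl
  rw [norm0, norm0, hG, mul_inv_rev, mul_smul, inv_smul_smul]

theorem pq_norm0 (f0 f : Esp n) (h : f ∈ U f0) : pq n (norm0 f0 f h) = pq n f :=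
  pq_smul _ f

theorem mem_D {f0 f : Esp n} (h : f ∈ pq n ⁻¹' Vs f0) : f ∈ U f0 := by
  rwa [preimage_Vs] at h

theorem mem_D' {f0 f : Esp n} (h : f ∈ U f0) : f ∈ pq n ⁻¹' Vs f0 := by
  rwa [preimage_Vs]

/-- The section of the quotient map over `Vs f0`. -/
noncomputable def sMap (f0 : Esp n) (v : Vs f0) : Esp n :=
  norm0 f0 v.2.choose v.2.choose_spec.1

theorem sMap_eq (f0 : Esp n) (v : Vs f0) (f : Esp n) (h : f ∈ U f0)
    (hf : pq n f = v.1) : sMap f0 v = norm0 f0 f h :=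
  norm0_unique f0 _ f _ h (v.2.choose_spec.2.trans hf.symm)

theorem pq_sMap (f0 : Esp n) (v : Vs f0) : pq n (sMap f0 v) = v.1 :=
  (pq_norm0 f0 _ _).trans v.2.choose_spec.2

theorem Mf_sMap (f0 : Esp n) (v : Vs f0) : Mf f0 (sMap f0 v) = 1 :=
  Mf_norm0 f0 _ _

theorem sMap_mem_U (f0 : Esp n) (v : Vs f0) : sMap f0 v ∈ U f0 := by
  show (Mf f0 (sMap f0 v)).det ≠ 0
  rw [Mf_sMap]
  simp

/-- Guard: `pq` is an open quotient map. -/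
theorem isOpenQuotientMap_pq : IsOpenQuotientMap (pq n) :=
  MulAction.isOpenQuotientMap_quotientMk

theorem isOpen_Vs (f0 : Esp n) : IsOpen (Vs f0) :=
  isOpenQuotientMap_pq.isOpenMap _ (isOpen_U f0)

theorem isOpen_preVs (f0 : Esp n) : IsOpen (pq n ⁻¹' Vs f0) :=
  (isOpen_Vs f0).preimage isOpenQuotientMap_pq.continuous

/-- The restricted quotient map. -/
noncomputable def q' (f0 : Esp n) (y : (pq n ⁻¹' Vs f0 : Set (Esp n))) : Vs f0 := ⟨pq n y.1, y.2⟩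

theorem continuous_q' (f0 : Esp n) : Continuous (q' f0) :=
  (isOpenQuotientMap_pq.continuous.comp continuous_subtype_val).subtype_mk _

theorem isQuotientMap_q' (f0 : Esp n) : IsQuotientMap (q' f0) := by
  apply IsOpenMap.isQuotientMap _ (continuous_q' f0)
  · rintro ⟨v, f, hfU, hpf⟩
    exact ⟨⟨f, mem_D' hfU⟩, Subtype.ext hpf⟩
  · intro O hO
    have hset : q' f0 '' O = Subtype.val ⁻¹' (pq n '' (Subtype.val '' O)) := by
      ext v
      constructor
      · rintro ⟨y, hy, rfl⟩
        exact ⟨y.1, ⟨y, hy, rfl⟩, rfl⟩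
      · rintro ⟨f, ⟨y, hy, rfl⟩, hpf⟩
        exact ⟨y, hy, Subtype.ext hpf⟩
    rw [hset]
    exact (isOpenQuotientMap_pq.isOpenMap _
      ((isOpen_preVs f0).isOpenMap_subtype_val _ hO)).preimage continuous_subtype_val

/-- The `GLn`-coordinate on the preimage. -/
noncomputable def GuD (f0 : Esp n) (y : (pq n ⁻¹' Vs f0 : Set (Esp n))) : GLn n :=
  Gu f0 y.1 (mem_D y.2)

theorem cont_GuD (f0 : Esp n) : Continuous (GuD f0) := by
  rw [Units.continuous_iff]
  constructor
  · exact (cont_Mf f0).comp continuous_subtype_val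
  · have key : (fun y : (pq n ⁻¹' Vs f0 : Set (Esp n)) =>
        (((GuD f0 y)⁻¹ : GLn n) : Matrix (Fin n) (Fin n) ℝ))
        = fun y => ((Mf f0 y.1).det)⁻¹ • (Mf f0 y.1).adjugate := by
      funext y
      rw [show (((GuD f0 y)⁻¹ : GLn n) : Matrix (Fin n) (Fin n) ℝ)
          = (Mf f0 y.1)⁻¹ from Matrix.coe_units_inv _]
      rw [Matrix.inv_def, Ring.inverse_eq_inv]
    rw [key]
    have hc : Continuous fun y : (pq n ⁻¹' Vs f0 : Set (Esp n)) => Mf f0 y.1 :=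
      (cont_Mf f0).comp continuous_subtype_val
    exact (hc.matrix_det.inv₀ fun y => mem_D y.2).smul hc.matrix_adjugate

theorem cont_sMap (f0 : Esp n) : Continuous (sMap f0) := by
  rw [(isQuotientMap_q' f0).continuous_iff]
  have hfun : (sMap f0 ∘ q' f0) = fun y => (GuD f0 y)⁻¹ • y.1 := by
    funext y
    exact sMap_eq f0 (q' f0 y) y.1 (mem_D y.2) rfl
  rw [hfun]
  exact cont_smul.comp ((cont_GuD f0).inv.prodMk continuous_subtype_val)

/-- The trivializing homeomorphism. -/
noncomputable def triv (f0 : Esp n) :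
    (pq n ⁻¹' Vs f0 : Set (Esp n)) ≃ₜ GLn n × Vs f0 where
  toFun y := (GuD f0 y, q' f0 y)
  invFun p := ⟨p.1 • sMap f0 p.2, by
    show pq n _ ∈ Vs f0
    rw [pq_smul, pq_sMap]
    exact p.2.2⟩
  left_inv y := by
    apply Subtype.ext
    show GuD f0 y • sMap f0 (q' f0 y) = y.1
    rw [sMap_eq f0 (q' f0 y) y.1 (mem_D y.2) rfl, norm0]
    exact smul_inv_smul _ _
  right_inv p := by
    refine Prod.ext ?_ (Subtype.ext ?_)
    · apply Units.ext
      show Mf f0 (p.1 • sMap f0 p.2) = (p.1 : Matrix (Fin n) (Fin n) ℝ)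
      rw [Mf_smul, Mf_sMap, mul_one]
    · show pq n (p.1 • sMap f0 p.2) = p.2.1
      rw [pq_smul, pq_sMap]
  continuous_toFun := (cont_GuD f0).prodMk (continuous_q' f0)
  continuous_invFun := by
    apply Continuous.subtype_mk
    exact cont_smul.comp (continuous_fst.prodMk ((cont_sMap f0).comp continuous_snd))

end Stmt13Aux

/-- The quotient map `p : E → E/GL(n,ℝ)` is a locally trivial
principal `GL(n,ℝ)`-bundle: every point of `E/GL(n,ℝ)` has an open neighborhood
`V` and a homeomorphism `φ : p⁻¹(V) ≃ₜ GL(n,ℝ) × V` whose second component is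
`p` and which is `GL(n,ℝ)`-equivariant: if `φ(f) = (g_f, p(f))` then
`φ(h · f) = (h g_f, p(f))` for all `h ∈ GL(n,ℝ)`. -/
theorem stmt13 (n : ℕ) (hn : 1 ≤ n) :
    ∀ x : QEsp n, ∃ V : Set (QEsp n), IsOpen V ∧ x ∈ V ∧
      ∃ φ : (pq n ⁻¹' V : Set (Esp n)) ≃ₜ GLn n × V,
        (∀ y : (pq n ⁻¹' V : Set (Esp n)), ((φ y).2 : QEsp n) = pq n (y : Esp n)) ∧
        (∀ (h : GLn n) (y y' : (pq n ⁻¹' V : Set (Esp n))),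
          (y' : Esp n) = h • (y : Esp n) → φ y' = (h * (φ y).1, (φ y).2)) := by
  intro x
  obtain ⟨f0, rfl⟩ : ∃ f0 : Esp n, pq n f0 = x := Quotient.exists_rep x
  refine ⟨Stmt13Aux.Vs f0, Stmt13Aux.isOpen_Vs f0,
    ⟨f0, Stmt13Aux.Mf_self_det_ne_zero f0, rfl⟩, Stmt13Aux.triv f0, ?_, ?_⟩
  · intro y
    rfl
  · intro h y y' hy
    have h1 : (Stmt13Aux.triv f0 y').1 = h * (Stmt13Aux.triv f0 y).1 := by
      apply Units.ext
      show Stmt13Aux.Mf f0 y'.1 = (h : Matrix (Fin n) (Fin n) ℝ) * Stmt13Aux.Mf f0 y.1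
      rw [hy, Stmt13Aux.Mf_smul]
    have h2 : (Stmt13Aux.triv f0 y').2 = (Stmt13Aux.triv f0 y).2 := by
      apply Subtype.ext
      show pq n y'.1 = pq n y.1
      rw [hy, Stmt13Aux.pq_smul]
    exact Prod.ext h1 h2
end
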